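/- Consider an ABPG sequence with g ≡ 0 (see context) converging to a point x̃ with ∇f(x̃) = 0, and assume f satisfies the KL inequality at x̃ with exponent θ ∈ (0, 1/2]: there exist c > 0, ε > 0, η > 0 such that |f(x) − f(x̃)|^θ ≤ c(1 − θ)‖∇f(x)‖ for all x with ‖x − x̃‖ < ε and f(x̃) < f(x) < f(x̃) + η. Then the sequence converges linearly: there exist c₁ > 0 and q ∈ [0, 1) such that ‖x^k − x̃‖ ≤ c₁·q^k for all k. -/

import Mathlib

open scoped RealInnerProductSpace NNReal

/-- Hessian–vector product `∇²φ(x) d`. -/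
noncomputable def hessApply {n : ℕ} (φ : EuclideanSpace ℝ (Fin n) → ℝ)
    (x d : EuclideanSpace ℝ (Fin n)) : EuclideanSpace ℝ (Fin n) :=
  fderiv ℝ (gradient φ) x d

section Aux
variable {n : ℕ}
local notation "E" => EuclideanSpace ℝ (Fin n)

lemma line_hasDerivAt {φ : E → ℝ} (hφ : Differentiable ℝ φ) (y v : E) (s : ℝ) :
    HasDerivAt (fun s : ℝ => φ (y + s • v)) ⟪gradient φ (y + s • v), v⟫ s := by
  have hg : HasGradientAt φ (gradient φ (y + s • v)) (y + s • v) :=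
    (hφ _).hasGradientAt
  have hF : HasFDerivAt φ ((InnerProductSpace.toDual ℝ E) (gradient φ (y + s • v)))
      (y + s • v) := hasGradientAt_iff_hasFDerivAt.mp hg
  have hc : HasDerivAt (fun s : ℝ => y + s • v) v s := by
    simpa using ((hasDerivAt_id s).smul_const v).const_add y
  have := hF.comp_hasDerivAt s hc
  simpa [InnerProductSpace.toDual_apply_apply, Function.comp_def] using this

lemma line_norm_hasDerivAt (y v : E) (s : ℝ) :
    HasDerivAt (fun s : ℝ => ‖y + s • v‖ ^ 2) (2 * ⟪y + s • v, v⟫) s := by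
  have hc : HasDerivAt (fun s : ℝ => y + s • v) v s := by
    simpa using ((hasDerivAt_id s).smul_const v).const_add y
  have h := hc.inner ℝ hc
  have heq : (fun s : ℝ => ‖y + s • v‖ ^ 2) = fun s : ℝ => ⟪y + s • v, y + s • v⟫ := by
    funext u; rw [real_inner_self_eq_norm_sq]
  rw [heq]
  refine h.congr_deriv ?_
  rw [real_inner_comm (y + s • v) v]; ring

lemma strong_mono {φ : E → ℝ} {σ : ℝ} (hφ : Differentiable ℝ φ)
    (hφsc : ConvexOn ℝ Set.univ (fun y => φ y - σ / 2 * ‖y‖ ^ 2))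
    (y v : E) : σ * ‖v‖ ^ 2 ≤ ⟪gradient φ (y + v) - gradient φ y, v⟫ := by
  set g : ℝ → ℝ := fun s => φ (y + s • v) - σ / 2 * ‖y + s • v‖ ^ 2 with hg
  have hgd : ∀ s : ℝ, HasDerivAt g
      (⟪gradient φ (y + s • v), v⟫ - σ / 2 * (2 * ⟪y + s • v, v⟫)) s := fun s =>
    (line_hasDerivAt hφ y v s).sub ((line_norm_hasDerivAt y v s).const_mul (σ / 2))
  have hconv : ConvexOn ℝ Set.univ g := by
    have := ConvexOn.comp_affineMap (𝕜 := ℝ)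
      (AffineMap.lineMap y (y + v) : ℝ →ᵃ[ℝ] EuclideanSpace ℝ (Fin n)) hφsc
    rw [Set.preimage_univ] at this
    suffices hgeq : g = (fun y => φ y - σ / 2 * ‖y‖ ^ 2) ∘
        ⇑(AffineMap.lineMap y (y + v) : ℝ →ᵃ[ℝ] EuclideanSpace ℝ (Fin n)) by
      rw [hgeq]; exact this
    funext s
    simp only [hg, Function.comp_apply, AffineMap.lineMap_apply_module, add_sub_cancel_left]
    rw [add_comm y (s • v)]
    have hmod : (1 - s : ℝ) • y + s • (y + v) = s • v + y := by module
    rw [hmod]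
  have hmono := hconv.monotoneOn_deriv (fun u _ => (hgd u).differentiableAt)
  have h01 : deriv g 0 ≤ deriv g 1 :=
    hmono (Set.mem_univ 0) (Set.mem_univ 1) zero_le_one
  rw [(hgd 0).deriv, (hgd 1).deriv] at h01
  simp only [zero_smul, one_smul, add_zero] at h01
  have hinner : ⟪y + v, v⟫ - ⟪y, v⟫ = ‖v‖ ^ 2 := by
    rw [inner_add_left, real_inner_self_eq_norm_sq]; ring
  have key : σ / 2 * (2 * ⟪y + v, v⟫) - σ / 2 * (2 * ⟪y, v⟫) = σ * ‖v‖ ^ 2 := by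
    rw [← hinner]; ring
  simp only [inner_sub_left]
  linarith

lemma gradient_contDiff {φ : E → ℝ} (hφ : ContDiff ℝ 2 φ) :
    ContDiff ℝ 1 (gradient φ) := by
  have h1 : ContDiff ℝ 1 (fderiv ℝ φ) := hφ.fderiv_right (by norm_num)
  exact ((InnerProductSpace.toDual ℝ
    (EuclideanSpace ℝ (Fin n))).symm.contDiff.comp h1 : _)

lemma hess_lower {φ : E → ℝ} {σ : ℝ} (hφ : ContDiff ℝ 2 φ)
    (hφsc : ConvexOn ℝ Set.univ (fun y => φ y - σ / 2 * ‖y‖ ^ 2))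
    (x d : E) : σ * ‖d‖ ^ 2 ≤ ⟪hessApply φ x d, d⟫ := by
  have hφd : Differentiable ℝ φ := hφ.differentiable (by norm_num)
  have hgc : ContDiff ℝ 1 (gradient φ) := gradient_contDiff hφ
  have hH : HasFDerivAt (gradient φ) (fderiv ℝ (gradient φ) x) x :=
    ((hgc.differentiable (by norm_num)) x).hasFDerivAt
  set G : ℝ → E := fun s => gradient φ (x + s • d) with hGdef
  have hc : HasDerivAt (fun s : ℝ => x + s • d) d 0 := by
    simpa using ((hasDerivAt_id (0:ℝ)).smul_const d).const_add x
  have hG : HasDerivAt G (hessApply φ x d) 0 := by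
    have hH0 : HasFDerivAt (gradient φ) (fderiv ℝ (gradient φ) x) (x + (0:ℝ) • d) := by
      simpa using hH
    exact hH0.comp_hasDerivAt 0 hc
  have hslope : Filter.Tendsto (slope G 0) (nhdsWithin 0 {(0:ℝ)}ᶜ)
      (nhds (hessApply φ x d)) := hasDerivAt_iff_tendsto_slope.mp hG
  have hslope' : Filter.Tendsto (slope G 0) (nhdsWithin 0 (Set.Ioi 0))
      (nhds (hessApply φ x d)) :=
    hslope.mono_left (nhdsWithin_mono 0 (fun s hs => ne_of_gt hs))
  have hF : Filter.Tendsto (fun s => ⟪slope G 0 s, d⟫) (nhdsWithin 0 (Set.Ioi 0))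
      (nhds ⟪hessApply φ x d, d⟫) := hslope'.inner tendsto_const_nhds
  refine ge_of_tendsto hF ?_
  refine Filter.eventually_of_mem self_mem_nhdsWithin (fun s hs => ?_)
  have hspos : (0:ℝ) < s := hs
  have hsm := strong_mono hφd hφsc x (s • d)
  have hnorm : ‖s • d‖ ^ 2 = s ^ 2 * ‖d‖ ^ 2 := by
    rw [norm_smul, Real.norm_eq_abs, mul_pow, sq_abs]
  have hinner : ⟪gradient φ (x + s • d) - gradient φ x, s • d⟫
      = s * ⟪gradient φ (x + s • d) - gradient φ x, d⟫ := real_inner_smul_right _ _ _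
  set I : ℝ := ⟪gradient φ (x + s • d) - gradient φ x, d⟫ with hI
  have h1 : σ * (s ^ 2 * ‖d‖ ^ 2) ≤ s * I := by rw [← hnorm, ← hinner]; exact hsm
  have h2 : σ * ‖d‖ ^ 2 * s ≤ I := by
    have := le_of_mul_le_mul_left (by linarith : s * (σ * ‖d‖ ^ 2 * s) ≤ s * I) hspos
    exact this
  have hval : ⟪slope G 0 s, d⟫ = s⁻¹ * I := by
    have hG0 : G 0 = gradient φ x := by simp [hGdef]
    simp [slope, hG0, hGdef, real_inner_smul_left, hI, vsub_eq_sub]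
  rw [hval]
  calc σ * ‖d‖ ^ 2 = s⁻¹ * (σ * ‖d‖ ^ 2 * s) := by
        field_simp
      _ ≤ s⁻¹ * I := by
        have : (0:ℝ) ≤ s⁻¹ := le_of_lt (inv_pos.mpr hspos)
        exact mul_le_mul_of_nonneg_left h2 this

end Aux

set_option maxHeartbeats 2000000 in
theorem abpg_linear_rate_KL_exponent_le_half {n : ℕ}
    (φ f : EuclideanSpace ℝ (Fin n) → ℝ) (σ : ℝ) (hσ : 0 < σ)
    (hφ : ContDiff ℝ 2 φ)
    (hφsc : ConvexOn ℝ Set.univ (fun y => φ y - σ / 2 * ‖y‖ ^ 2))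
    (hf : ContDiff ℝ 1 f)
    (hbdd : BddBelow (Set.range f))
    (hlevel : ∀ r : ℝ, Bornology.IsBounded {y | f y ≤ r})
    (hlip : ∀ s : Set (EuclideanSpace ℝ (Fin n)), Bornology.IsBounded s →
      ∃ K : ℝ≥0, LipschitzOnWith K (gradient f) s)
    (lam : ℝ) (hlam : 0 < lam) (α : ℝ) (hα : α ∈ Set.Ioo (0 : ℝ) 1)
    (tmin : ℝ) (htmin : tmin ∈ Set.Ioc (0 : ℝ) 1)
    (x d : ℕ → EuclideanSpace ℝ (Fin n)) (t : ℕ → ℝ)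
    (ht : ∀ k, t k ∈ Set.Icc tmin 1)
    (hopt : ∀ k, gradient f (x k) + (1 / lam) • hessApply φ (x k) (d k) = 0)
    (hupd : ∀ k, x (k + 1) = x k + t k • d k)
    (hdec : ∀ k, f (x (k + 1)) ≤
      f (x k) - α * t k / (2 * lam) * ⟪hessApply φ (x k) (d k), d k⟫)
    (xtilde : EuclideanSpace ℝ (Fin n))
    (hconv : Filter.Tendsto x Filter.atTop (nhds xtilde))
    (hstat : gradient f xtilde = 0)
    (θ : ℝ) (hθ : θ ∈ Set.Ioc (0 : ℝ) (1 / 2))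
    (c ε η : ℝ) (hc : 0 < c) (hε : 0 < ε) (hη : 0 < η)
    (hKL : ∀ y : EuclideanSpace ℝ (Fin n), ‖y - xtilde‖ < ε →
      f xtilde < f y → f y < f xtilde + η →
        |f y - f xtilde| ^ θ ≤ c * (1 - θ) * ‖gradient f y‖) :
    ∃ c₁ : ℝ, 0 < c₁ ∧ ∃ q : ℝ, 0 ≤ q ∧ q < 1 ∧
      ∀ k : ℕ, ‖x k - xtilde‖ ≤ c₁ * q ^ k := by
  obtain ⟨hα0, hα1⟩ := hα
  obtain ⟨htmin0, htmin1⟩ := htmin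
  obtain ⟨hθ0, hθhalf⟩ := hθ
  set r : ℕ → ℝ := fun k => f (x k) - f xtilde with hrdef
  set a : ℝ := α * tmin * σ / (2 * lam) with hadef
  have ha0 : 0 < a := by positivity
  -- sufficient decrease in terms of ‖d k‖²
  have hdesc : ∀ k, f (x (k + 1)) ≤ f (x k) - a * ‖d k‖ ^ 2 := by
    intro k
    have h1 := hess_lower hφ hφsc (x k) (d k)
    have htk := ht k
    have hHnn : 0 ≤ ⟪hessApply φ (x k) (d k), d k⟫ := le_trans (by positivity) h1
    have h3 : a * ‖d k‖ ^ 2 ≤ α * t k / (2 * lam) * ⟪hessApply φ (x k) (d k), d k⟫ := by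
      have h4 : α * tmin / (2 * lam) ≤ α * t k / (2 * lam) := by
        gcongr
        exact htk.1
      calc a * ‖d k‖ ^ 2 = α * tmin / (2 * lam) * (σ * ‖d k‖ ^ 2) := by
            rw [hadef]; ring
        _ ≤ α * tmin / (2 * lam) * ⟪hessApply φ (x k) (d k), d k⟫ :=
            mul_le_mul_of_nonneg_left h1 (by positivity)
        _ ≤ α * t k / (2 * lam) * ⟪hessApply φ (x k) (d k), d k⟫ :=
            mul_le_mul_of_nonneg_right h4 hHnn
    linarith [hdec k]
  have hstep : ∀ k, f (x (k + 1)) ≤ f (x k) := fun k =>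
    le_trans (hdesc k) (by nlinarith [norm_nonneg (d k), sq_nonneg ‖d k‖])
  have hanti : Antitone (fun k => f (x k)) :=
    antitone_nat_of_succ_le hstep
  have hflim : Filter.Tendsto (fun k => f (x k)) Filter.atTop (nhds (f xtilde)) :=
    (hf.continuous.tendsto xtilde).comp hconv
  have hrge : ∀ k, f xtilde ≤ f (x k) := by
    intro k
    refine le_of_tendsto hflim ?_
    exact Filter.eventually_atTop.mpr ⟨k, fun m hm => hanti hm⟩
  have hr0 : ∀ k, 0 ≤ r k := fun k => sub_nonneg.mpr (hrge k)
  have hrmono : ∀ k, r (k + 1) ≤ r k := fun k => sub_le_sub_right (hstep k) _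
  have hrdesc : ∀ k, r (k + 1) ≤ r k - a * ‖d k‖ ^ 2 := by
    intro k
    have := hdesc k
    simp only [hrdef]
    linarith
  have hrlim : Filter.Tendsto r Filter.atTop (nhds 0) := by
    have := hflim.sub_const (f xtilde)
    simpa using this
  -- bound on the Hessian operator norms along the sequence
  have hgc : ContDiff ℝ 1 (gradient φ) := gradient_contDiff hφ
  have hcont : Continuous fun y => ‖fderiv ℝ (gradient φ) y‖ :=
    (hgc.continuous_fderiv (by norm_num)).norm
  have hAtend : Filter.Tendsto (fun k => ‖fderiv ℝ (gradient φ) (x k)‖)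
      Filter.atTop (nhds ‖fderiv ℝ (gradient φ) xtilde‖) :=
    (hcont.tendsto _).comp hconv
  obtain ⟨M0, hM0⟩ := hAtend.bddAbove_range
  set M : ℝ := max M0 1 with hMdef
  have hM1 : (1:ℝ) ≤ M := le_max_right _ _
  have hM0pos : 0 < M := lt_of_lt_of_le one_pos hM1
  have hMb : ∀ k, ‖fderiv ℝ (gradient φ) (x k)‖ ≤ M := by
    intro k
    exact le_trans (hM0 (Set.mem_range_self k)) (le_max_left _ _)
  -- gradient bound
  have hgradb : ∀ k, ‖gradient f (x k)‖ ≤ M / lam * ‖d k‖ := by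
    intro k
    have h1 : gradient f (x k) = -((1 / lam) • hessApply φ (x k) (d k)) :=
      eq_neg_of_add_eq_zero_left (hopt k)
    rw [h1, norm_neg, norm_smul, Real.norm_eq_abs,
      abs_of_pos (by positivity : (0:ℝ) < 1 / lam)]
    have h2 : ‖hessApply φ (x k) (d k)‖ ≤ M * ‖d k‖ := by
      calc ‖hessApply φ (x k) (d k)‖ ≤ ‖fderiv ℝ (gradient φ) (x k)‖ * ‖d k‖ :=
            (fderiv ℝ (gradient φ) (x k)).le_opNorm (d k)
        _ ≤ M * ‖d k‖ := mul_le_mul_of_nonneg_right (hMb k) (norm_nonneg _)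
    calc 1 / lam * ‖hessApply φ (x k) (d k)‖ ≤ 1 / lam * (M * ‖d k‖) :=
          mul_le_mul_of_nonneg_left h2 (by positivity)
      _ = M / lam * ‖d k‖ := by ring
  set C2 : ℝ := c * (1 - θ) * (M / lam) with hC2def
  have hθ1 : (0:ℝ) < 1 - θ := by linarith
  have hC2pos : 0 < C2 := by positivity
  -- choose N
  have hev : ∀ᶠ k in Filter.atTop,
      ‖x k - xtilde‖ < ε ∧ f (x k) < f xtilde + η ∧ r k ≤ 1 := by
    have h1 : ∀ᶠ k in Filter.atTop, ‖x k - xtilde‖ < ε := by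
      have := Metric.tendsto_atTop.mp hconv ε hε
      obtain ⟨N, hN⟩ := this
      refine Filter.eventually_atTop.mpr ⟨N, fun m hm => ?_⟩
      have := hN m hm
      rwa [dist_eq_norm] at this
    have h2 : ∀ᶠ k in Filter.atTop, f (x k) < f xtilde + η :=
      hflim.eventually_lt_const (by linarith)
    have h3 : ∀ᶠ k in Filter.atTop, r k ≤ 1 :=
      hrlim.eventually_le_const one_pos
    exact (h1.and (h2.and h3))
  obtain ⟨N, hN⟩ := Filter.eventually_atTop.mp hev
  -- contraction factor
  set q0 : ℝ := max (1 - a / C2 ^ 2) (1 / 2) with hq0def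
  have hq0half : (1:ℝ) / 2 ≤ q0 := le_max_right _ _
  have hq0pos : 0 < q0 := by linarith
  have hq0lt1 : q0 < 1 := by
    refine max_lt ?_ (by norm_num)
    have : 0 < a / C2 ^ 2 := by positivity
    linarith
  have hkey : ∀ k, N ≤ k → r (k + 1) ≤ q0 * r k := by
    intro k hk
    rcases eq_or_lt_of_le (hr0 k) with h0 | hpos
    · have h1 : r (k + 1) ≤ 0 := by rw [h0]; exact hrmono k
      have h2 : q0 * r k = 0 := by rw [← h0, mul_zero]
      linarith
    · obtain ⟨hball, hfless, hr1⟩ := hN k hk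
      have hfgt : f xtilde < f (x k) := by
        have := hpos; simp only [hrdef] at this; linarith
      have hKLk := hKL (x k) hball hfgt hfless
      have habs : |f (x k) - f xtilde| = r k := abs_of_pos hpos
      rw [habs] at hKLk
      have h5 : r k ^ θ ≤ C2 * ‖d k‖ := by
        refine le_trans hKLk ?_
        rw [hC2def]
        calc c * (1 - θ) * ‖gradient f (x k)‖
            ≤ c * (1 - θ) * (M / lam * ‖d k‖) :=
              mul_le_mul_of_nonneg_left (hgradb k) (by positivity)
          _ = c * (1 - θ) * (M / lam) * ‖d k‖ := by ring
      have hrθnn : 0 ≤ r k ^ θ := Real.rpow_nonneg (hr0 k) θ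
      have h6 : (r k ^ θ) ^ 2 ≤ C2 ^ 2 * ‖d k‖ ^ 2 := by
        have := pow_le_pow_left₀ hrθnn h5 2
        rwa [mul_pow] at this
      have h7 : (r k ^ θ) ^ (2:ℕ) = r k ^ (θ * 2) := by
        rw [← Real.rpow_natCast (r k ^ θ) 2, ← Real.rpow_mul (hr0 k)]
        norm_num
      have h8 : r k ≤ r k ^ (θ * 2) := by
        have := Real.rpow_le_rpow_of_exponent_ge hpos hr1 (by linarith : θ * 2 ≤ 1)
        rwa [Real.rpow_one] at this
      have h9 : r k ≤ C2 ^ 2 * ‖d k‖ ^ 2 := by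
        calc r k ≤ r k ^ (θ * 2) := h8
          _ = (r k ^ θ) ^ (2:ℕ) := h7.symm
          _ ≤ C2 ^ 2 * ‖d k‖ ^ 2 := h6
      have h10 : a * (r k / C2 ^ 2) ≤ a * ‖d k‖ ^ 2 := by
        refine mul_le_mul_of_nonneg_left ?_ ha0.le
        rw [div_le_iff₀ (by positivity)]
        linarith [h9]
      calc r (k + 1) ≤ r k - a * ‖d k‖ ^ 2 := hrdesc k
        _ ≤ r k - a * (r k / C2 ^ 2) := by linarith
        _ = (1 - a / C2 ^ 2) * r k := by ring
        _ ≤ q0 * r k := mul_le_mul_of_nonneg_right (le_max_left _ _) (hr0 k)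
  -- geometric decay of r
  have hgeo : ∀ k, N ≤ k → r k ≤ r N * q0 ^ (k - N) := by
    intro k hk
    induction k, hk using Nat.le_induction with
    | base => simp
    | succ m hm ih =>
      have h1 : r (m + 1) ≤ q0 * r m := hkey m hm
      have h2 : q0 * r m ≤ q0 * (r N * q0 ^ (m - N)) :=
        mul_le_mul_of_nonneg_left ih hq0pos.le
      have h3 : m + 1 - N = (m - N) + 1 := by omega
      rw [h3, pow_succ]
      calc r (m + 1) ≤ q0 * (r N * q0 ^ (m - N)) := le_trans h1 h2
        _ = r N * (q0 ^ (m - N) * q0) := by ring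
  -- square root contraction factor
  set s : ℝ := Real.sqrt q0 with hsdef
  have hs0 : 0 < s := Real.sqrt_pos.mpr hq0pos
  have hssq : s ^ 2 = q0 := Real.sq_sqrt hq0pos.le
  have hs1 : s < 1 := by nlinarith
  have h1s : 0 < 1 - s := by linarith
  have hspow : ∀ m : ℕ, Real.sqrt (q0 ^ m) = s ^ m := by
    intro m
    induction m with
    | zero => simp
    | succ m ih =>
      rw [pow_succ, Real.sqrt_mul (pow_nonneg hq0pos.le m), ih, ← hsdef, pow_succ]
  set D : ℝ := Real.sqrt (r N / a) with hDdef
  have hDnn : 0 ≤ D := Real.sqrt_nonneg _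
  -- bound on the step norms
  have hdb : ∀ k, N ≤ k → ‖d k‖ ≤ D * s ^ (k - N) := by
    intro k hk
    have h1 : a * ‖d k‖ ^ 2 ≤ r k := by linarith [hrdesc k, hr0 (k + 1)]
    have h2 : ‖d k‖ ^ 2 ≤ r N / a * q0 ^ (k - N) := by
      rw [div_mul_eq_mul_div, le_div_iff₀ ha0]
      have := hgeo k hk
      nlinarith
    have h3 : ‖d k‖ ≤ Real.sqrt (r N / a * q0 ^ (k - N)) := by
      calc ‖d k‖ = Real.sqrt (‖d k‖ ^ 2) := (Real.sqrt_sq (norm_nonneg _)).symm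
        _ ≤ Real.sqrt (r N / a * q0 ^ (k - N)) := Real.sqrt_le_sqrt h2
    rwa [Real.sqrt_mul (div_nonneg (hr0 N) ha0.le), hspow, ← hDdef] at h3
  -- telescoping
  have hxsum : ∀ k m, k ≤ m → ‖x m - x k‖ ≤ ∑ j ∈ Finset.Ico k m, ‖d j‖ := by
    intro k m hkm
    induction m, hkm using Nat.le_induction with
    | base => simp
    | succ m hm ih =>
      have h1 : x (m + 1) - x k = (x m - x k) + t m • d m := by rw [hupd m]; abel
      have h2 : ‖x (m + 1) - x k‖ ≤ ‖x m - x k‖ + ‖t m • d m‖ := by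
        rw [h1]; exact norm_add_le _ _
      have h3 : ‖t m • d m‖ ≤ ‖d m‖ := by
        rw [norm_smul, Real.norm_eq_abs, abs_of_pos (lt_of_lt_of_le htmin0 (ht m).1)]
        nlinarith [(ht m).2, norm_nonneg (d m)]
      rw [Finset.sum_Ico_succ_top hm]
      linarith
  -- geometric sum bound
  have hsumgeo : ∀ k m, N ≤ k → k ≤ m →
      ∑ j ∈ Finset.Ico k m, ‖d j‖ ≤ D * s ^ (k - N) * (1 - s)⁻¹ := by
    intro k m hNk hkm
    have h1 : ∑ j ∈ Finset.Ico k m, ‖d j‖ ≤ ∑ j ∈ Finset.Ico k m, D * s ^ (j - N) :=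
      Finset.sum_le_sum (fun j hj => hdb j (le_trans hNk (Finset.mem_Ico.mp hj).1))
    have h2 : ∑ j ∈ Finset.Ico k m, D * s ^ (j - N)
        = D * s ^ (k - N) * ∑ i ∈ Finset.range (m - k), s ^ i := by
      rw [Finset.sum_Ico_eq_sum_range, Finset.mul_sum]
      refine Finset.sum_congr rfl (fun i _ => ?_)
      have h4 : k + i - N = (k - N) + i := by omega
      rw [h4, pow_add]
      ring
    have h3 : ∑ i ∈ Finset.range (m - k), s ^ i ≤ (1 - s)⁻¹ := by
      rw [geom_sum_eq (ne_of_lt hs1)]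
      have h5 : (s ^ (m - k) - 1) / (s - 1) = (1 - s ^ (m - k)) / (1 - s) := by
        rw [div_eq_div_iff (by linarith) (by linarith)]
        ring
      rw [h5, inv_eq_one_div]
      gcongr
      nlinarith [pow_nonneg hs0.le (m - k)]
    calc ∑ j ∈ Finset.Ico k m, ‖d j‖ ≤ D * s ^ (k - N) * ∑ i ∈ Finset.range (m - k), s ^ i := by
          rw [← h2]; exact h1
      _ ≤ D * s ^ (k - N) * (1 - s)⁻¹ := by
          refine mul_le_mul_of_nonneg_left h3 (by positivity)
  -- limit bound
  have hxb : ∀ k, N ≤ k → ‖x k - xtilde‖ ≤ D * s ^ (k - N) * (1 - s)⁻¹ := by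
    intro k hk
    have h1 : Filter.Tendsto (fun m => ‖x m - x k‖) Filter.atTop (nhds ‖xtilde - x k‖) :=
      ((hconv.sub_const (x k)).norm)
    have h2 : ‖xtilde - x k‖ ≤ D * s ^ (k - N) * (1 - s)⁻¹ := by
      refine le_of_tendsto h1 ?_
      exact Filter.eventually_atTop.mpr
        ⟨k, fun m hm => le_trans (hxsum k m hm) (hsumgeo k m hk hm)⟩
    rwa [norm_sub_rev] at h2
  -- assemble the final constants
  set c₁ : ℝ := D * (1 - s)⁻¹ / s ^ N + (∑ j ∈ Finset.range N, ‖x j - xtilde‖ / s ^ j) + 1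
    with hc₁def
  have hsumnn : 0 ≤ ∑ j ∈ Finset.range N, ‖x j - xtilde‖ / s ^ j :=
    Finset.sum_nonneg (fun j _ => div_nonneg (norm_nonneg _) (by positivity))
  have hterm1nn : 0 ≤ D * (1 - s)⁻¹ / s ^ N := by positivity
  refine ⟨c₁, by rw [hc₁def]; linarith, s, hs0.le, hs1, ?_⟩
  intro k
  by_cases hk : N ≤ k
  · have h1 := hxb k hk
    have h2 : D * s ^ (k - N) * (1 - s)⁻¹ = D * (1 - s)⁻¹ / s ^ N * s ^ k := by
      rw [pow_sub₀ s (ne_of_gt hs0) hk]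
      ring
    rw [h2] at h1
    refine le_trans h1 ?_
    have h3 : D * (1 - s)⁻¹ / s ^ N ≤ c₁ := by rw [hc₁def]; linarith
    exact mul_le_mul_of_nonneg_right h3 (by positivity)
  · push_neg at hk
    have h1 : ‖x k - xtilde‖ / s ^ k ≤ ∑ j ∈ Finset.range N, ‖x j - xtilde‖ / s ^ j :=
      Finset.single_le_sum (f := fun j => ‖x j - xtilde‖ / s ^ j)
        (fun j _ => div_nonneg (norm_nonneg _) (by positivity))
        (Finset.mem_range.mpr hk)
    have h2 : ‖x k - xtilde‖ = ‖x k - xtilde‖ / s ^ k * s ^ k := by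
      field_simp
    rw [h2]
    have h3 : ‖x k - xtilde‖ / s ^ k ≤ c₁ := by rw [hc₁def]; linarith
    exact mul_le_mul_of_nonneg_right h3 (by positivity)
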